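/- arXiv:1112.2425 — 6 statements merged into one kernel-verified Lean document; each statement's English description precedes it below -/
import Mathlib

section
/- Let p be a prime and λ_1, ..., λ_n ∈ (0,1] real numbers with λ := λ_1 + ... + λ_n ≤ 1. If for every e ≥ 1 the e-th digits of the non-terminating base-p expansions satisfy λ_1^(e) + ... + λ_n^(e) ≤ p - 1, then for all e ≥ 1 the e-th digit of λ equals λ_1^(e) + ... + λ_n^(e). -/
open Finset


private lemma geom_tail (q : ℝ) (hq : 1 < q) (e : ℕ) :
    ∑' d : ℕ, (q - 1) / q ^ (d + e + 1) = 1 / q ^ e := by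
  have hq0 : 0 < q := lt_trans one_pos hq
  have h1 : (1:ℝ)/q < 1 := by rw [div_lt_one hq0]; exact hq
  have h0 : (0:ℝ) ≤ 1/q := by positivity
  have hgeo := tsum_geometric_of_lt_one h0 h1
  have hrw : ∀ d : ℕ, (q - 1) / q ^ (d + e + 1) = ((q-1)/q^(e+1)) * (1/q)^d := by
    intro d
    rw [div_pow, one_pow, show d+e+1 = d+(e+1) by omega, pow_add,
      div_mul_div_comm, mul_one, mul_comm]
  rw [tsum_congr hrw, tsum_mul_left, hgeo]
  have hne : q - 1 ≠ 0 := by linarith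
  have hqe : q ^ e ≠ 0 := by positivity
  have h2 : (1 - 1/q) = (q-1)/q := by field_simp
  rw [h2, inv_div, pow_succ]
  field_simp

private lemma tail_le (p : ℕ) (hp : 2 ≤ p) (f : ℕ → ℕ)
    (hf : ∀ d, 1 ≤ d → f d ≤ p - 1) (e : ℕ)
    (hs : Summable (fun d : ℕ => (f (d + 1) : ℝ) / (p : ℝ) ^ (d + 1))) :
    ∑' d : ℕ, (f (d + e + 1) : ℝ) / (p : ℝ) ^ (d + e + 1) ≤ 1 / (p : ℝ) ^ e := by
  have hq1 : (1:ℝ) < p := by exact_mod_cast by omega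
  have hq0 : (0:ℝ) < p := by linarith
  have hs' : Summable (fun d : ℕ => (f (d + e + 1) : ℝ) / (p : ℝ) ^ (d + e + 1)) := by
    have := (summable_nat_add_iff (f := fun d : ℕ => (f (d + 1) : ℝ) / (p : ℝ) ^ (d + 1)) e).2 hs
    exact this
  have hgs : Summable (fun d : ℕ => ((p:ℝ) - 1) / (p:ℝ) ^ (d + e + 1)) := by
    have hrw : ∀ d : ℕ, ((p:ℝ) - 1) / (p:ℝ) ^ (d + e + 1) = (((p:ℝ)-1)/(p:ℝ)^(e+1)) * (1/(p:ℝ))^d := by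
      intro d
      rw [div_pow, one_pow, show d+e+1 = d+(e+1) by omega, pow_add,
        div_mul_div_comm, mul_one, mul_comm]
    rw [funext hrw]
    exact (summable_geometric_of_lt_one (by positivity) (by rw [div_lt_one hq0]; exact hq1)).mul_left _
  calc ∑' d : ℕ, (f (d + e + 1) : ℝ) / (p : ℝ) ^ (d + e + 1)
      ≤ ∑' d : ℕ, ((p:ℝ) - 1) / (p:ℝ) ^ (d + e + 1) := by
        apply Summable.tsum_le_tsum _ hs' hgs
        intro d
        have h := hf (d + e + 1) (by omega)
        have h2 : (f (d + e + 1) : ℝ) ≤ (p:ℝ) - 1 := by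
          have h3 : ((p - 1 : ℕ) : ℝ) = (p:ℝ) - 1 := by
            push_cast [Nat.cast_sub (by omega : 1 ≤ p)]; ring
          rw [← h3]; exact_mod_cast h
        gcongr
    _ = 1 / (p:ℝ) ^ e := geom_tail _ hq1 e

private lemma tail_pos (p : ℕ) (hp : 2 ≤ p) (f : ℕ → ℕ)
    (hnt : ∀ N, ∃ d ≥ N, f d ≠ 0) (e : ℕ)
    (hs : Summable (fun d : ℕ => (f (d + 1) : ℝ) / (p : ℝ) ^ (d + 1))) :
    0 < ∑' d : ℕ, (f (d + e + 1) : ℝ) / (p : ℝ) ^ (d + e + 1) := by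
  have hq0 : (0:ℝ) < p := by exact_mod_cast by omega
  obtain ⟨d0, hd0, hne⟩ := hnt (e + 1)
  have hs' : Summable (fun d : ℕ => (f (d + e + 1) : ℝ) / (p : ℝ) ^ (d + e + 1)) :=
    (summable_nat_add_iff (f := fun d : ℕ => (f (d + 1) : ℝ) / (p : ℝ) ^ (d + 1)) e).2 hs
  refine Summable.tsum_pos hs' (fun d => by positivity) (d0 - e - 1) ?_
  rw [show d0 - e - 1 + e + 1 = d0 by omega]
  exact div_pos (by exact_mod_cast Nat.pos_of_ne_zero hne) (by positivity)

private lemma no_lt (p : ℕ) (hp : 2 ≤ p) (b c : ℕ → ℕ)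
    (hc : ∀ d, 1 ≤ d → c d ≤ p - 1) (x : ℝ)
    (hbs : HasSum (fun d : ℕ => (b (d + 1) : ℝ) / (p : ℝ) ^ (d + 1)) x)
    (hcs : HasSum (fun d : ℕ => (c (d + 1) : ℝ) / (p : ℝ) ^ (d + 1)) x)
    (hbnt : ∀ N, ∃ d ≥ N, b d ≠ 0)
    (e : ℕ) (he : 1 ≤ e)
    (hagree : ∀ d, 1 ≤ d → d < e → b d = c d)
    (hlt : c e < b e) : False := by
  have hq1 : (1:ℝ) < p := by exact_mod_cast by omega
  have hq0 : (0:ℝ) < p := by linarith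
  obtain ⟨m, rfl⟩ : ∃ m, e = m + 1 := ⟨e - 1, by omega⟩
  have hbsplit := Summable.sum_add_tsum_nat_add
    (f := fun d : ℕ => (b (d + 1) : ℝ) / (p : ℝ) ^ (d + 1)) (m + 1) hbs.summable
  have hcsplit := Summable.sum_add_tsum_nat_add
    (f := fun d : ℕ => (c (d + 1) : ℝ) / (p : ℝ) ^ (d + 1)) (m + 1) hcs.summable
  rw [hbs.tsum_eq] at hbsplit
  rw [hcs.tsum_eq] at hcsplit
  rw [Finset.sum_range_succ] at hbsplit hcsplit
  have hpre : ∑ d ∈ range m, (b (d + 1) : ℝ) / (p : ℝ) ^ (d + 1)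
      = ∑ d ∈ range m, (c (d + 1) : ℝ) / (p : ℝ) ^ (d + 1) := by
    apply Finset.sum_congr rfl
    intro d hd
    rw [hagree (d + 1) (by omega) (by simp at hd; omega)]
  have hTb : 0 < ∑' d : ℕ, (b (d + (m+1) + 1) : ℝ) / (p : ℝ) ^ (d + (m+1) + 1) :=
    tail_pos p hp b hbnt (m + 1) hbs.summable
  have hTc : ∑' d : ℕ, (c (d + (m+1) + 1) : ℝ) / (p : ℝ) ^ (d + (m+1) + 1) ≤ 1 / (p:ℝ) ^ (m+1) :=
    tail_le p hp c hc (m + 1) hcs.summable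
  have hbc : (c (m + 1) : ℝ) + 1 ≤ (b (m + 1) : ℝ) := by exact_mod_cast hlt
  have hdig : ((c (m + 1) : ℝ) + 1) / (p:ℝ) ^ (m+1) ≤ (b (m + 1) : ℝ) / (p:ℝ) ^ (m+1) := by
    gcongr
  rw [add_div] at hdig
  linarith [hbsplit, hcsplit, hpre, hTb, hTc, hdig]

/-- If `λ_1, …, λ_n ∈ (0,1]` have non-terminating base-`p` digits `a i`, their sum
`λ = ∑ λ_i ≤ 1` has digits `b`, and for every `e ≥ 1` the `e`-th digits add without
carrying (`∑ i, a i e ≤ p - 1`), then `b e = ∑ i, a i e` for all `e ≥ 1`. -/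
theorem stmt2 (p n : ℕ) (hp : p.Prime) (lam : Fin n → ℝ)
    (hlam : ∀ i, lam i ∈ Set.Ioc (0 : ℝ) 1)
    (a : Fin n → ℕ → ℕ) (ha : ∀ i d, a i d ≤ p - 1)
    (hsum : ∀ i, HasSum (fun d : ℕ => (a i (d + 1) : ℝ) / (p : ℝ) ^ (d + 1)) (lam i))
    (hnt : ∀ i N, ∃ d ≥ N, a i d ≠ 0)
    (htot : ∑ i, lam i ≤ 1)
    (b : ℕ → ℕ) (hb : ∀ d, b d ≤ p - 1)
    (hbsum : HasSum (fun d : ℕ => (b (d + 1) : ℝ) / (p : ℝ) ^ (d + 1)) (∑ i, lam i))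
    (hbnt : ∀ N, ∃ d ≥ N, b d ≠ 0)
    (hcarry : ∀ e, 1 ≤ e → ∑ i, a i e ≤ p - 1) :
    ∀ e, 1 ≤ e → b e = ∑ i, a i e := by
  classical
  have hp2 : 2 ≤ p := hp.two_le
  have hq0 : (0:ℝ) < p := by exact_mod_cast by omega
  rcases Nat.eq_zero_or_pos n with rfl | hn
  · exfalso
    simp only [Finset.univ_eq_empty, Finset.sum_empty] at hbsum
    obtain ⟨d, hd, hne⟩ := hbnt 1
    have hle := le_hasSum hbsum (d - 1) (fun i _ => by positivity)
    rw [show d - 1 + 1 = d by omega] at hle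
    have hnn : (0:ℝ) ≤ (b d : ℝ) / (p:ℝ) ^ d := by positivity
    have h0 : (b d : ℝ) / (p:ℝ) ^ d = 0 := le_antisymm hle hnn
    have : (b d : ℝ) = 0 := by
      field_simp at h0
      exact_mod_cast h0
    exact hne (by exact_mod_cast this)
  · set c : ℕ → ℕ := fun e => ∑ i, a i e with hcdef
    have hcsum : HasSum (fun d : ℕ => (c (d + 1) : ℝ) / (p : ℝ) ^ (d + 1)) (∑ i, lam i) := by
      have h := hasSum_sum (f := fun (i : Fin n) (d : ℕ) => (a i (d + 1) : ℝ) / (p : ℝ) ^ (d + 1))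
        (s := Finset.univ) (fun i _ => hsum i)
      convert h using 1
      funext d
      simp only [hcdef]
      push_cast
      rw [Finset.sum_div]
    have hcb : ∀ d, 1 ≤ d → c d ≤ p - 1 := fun d hd => hcarry d hd
    have hcnt : ∀ N, ∃ d ≥ N, c d ≠ 0 := by
      intro N
      obtain ⟨d, hd, hne⟩ := hnt ⟨0, hn⟩ N
      refine ⟨d, hd, fun h => hne ?_⟩
      exact Finset.sum_eq_zero_iff.mp h _ (Finset.mem_univ _)
    by_contra hcon
    push_neg at hcon
    obtain ⟨e0, he0, hne0⟩ := hcon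
    have hex : ∃ e, 1 ≤ e ∧ b e ≠ c e := ⟨e0, he0, hne0⟩
    obtain ⟨he1, hbe⟩ := Nat.find_spec hex
    set e := Nat.find hex with hedef
    have hagree : ∀ d, 1 ≤ d → d < e → b d = c d := by
      intro d h1 h2
      by_contra h
      have hle : e ≤ d := Nat.find_le ⟨h1, h⟩
      omega
    rcases lt_or_gt_of_ne hbe with h | h
    · exact no_lt p hp2 c b (fun d _ => hb d) (∑ i, lam i) hcsum hbsum hcnt e he1
        (fun d h1 h2 => (hagree d h1 h2).symm) h
    · exact no_lt p hp2 b c hcb (∑ i, lam i) hbsum hcsum hbnt e he1 hagree h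
end

section
/- Let p be a prime and k_1, ..., k_n natural numbers with N = k_1 + ... + k_n. Then the multinomial coefficient N!/(k_1! ⋯ k_n!) is not divisible by p if and only if for every i ≥ 0 the sum of the i-th base-p digits of k_1, ..., k_n is at most p - 1 (i.e., k_1, ..., k_n add without carrying in base p). -/
open Finset Nat

/-- Key digit recursion: `C (i+1) = C i + p^i * D i`. -/
private lemma sum_mod_pow_succ (p n : ℕ) (k : Fin n → ℕ) (i : ℕ) :
    ∑ j : Fin n, k j % p ^ (i + 1) =
      (∑ j : Fin n, k j % p ^ i) + p ^ i * ∑ j : Fin n, (k j / p ^ i) % p := by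
  rw [Finset.mul_sum, ← Finset.sum_add_distrib]
  refine Finset.sum_congr rfl fun j _ => ?_
  rw [pow_succ, Nat.mod_mul]

private lemma carry_iff (p n : ℕ) (hp : 1 < p) (k : Fin n → ℕ) :
    (∀ i : ℕ, ∑ j : Fin n, k j % p ^ i < p ^ i) ↔
      ∀ i : ℕ, ∑ j : Fin n, (k j / p ^ i) % p ≤ p - 1 := by
  constructor
  · intro h i
    have h1 := h (i + 1)
    rw [sum_mod_pow_succ] at h1
    have hpi : 0 < p ^ i := Nat.pow_pos (by omega)
    have : p ^ i * ∑ j : Fin n, (k j / p ^ i) % p < p ^ i * p := by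
      rw [← pow_succ]; omega
    have := Nat.lt_of_mul_lt_mul_left this
    omega
  · intro h i
    induction i with
    | zero => simp [Nat.mod_one]
    | succ i ih =>
      rw [sum_mod_pow_succ]
      have hpi : 0 < p ^ i := Nat.pow_pos (by omega)
      have h2 : p ^ i * ∑ j : Fin n, (k j / p ^ i) % p ≤ p ^ i * (p - 1) :=
        Nat.mul_le_mul_left _ (h i)
      have : p ^ i * (p - 1) + p ^ i = p ^ (i + 1) := by
        rw [pow_succ, Nat.mul_sub_one]
        have : p ^ i ≤ p ^ i * p := Nat.le_mul_of_pos_right _ (by omega)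
        omega
      omega

private lemma sum_div_le (m : ℕ) {n : ℕ} (k : Fin n → ℕ) :
    ∑ j : Fin n, k j / m ≤ (∑ j : Fin n, k j) / m := by
  rcases Nat.eq_zero_or_pos m with hm | hm
  · simp [hm]
  rw [Nat.le_div_iff_mul_le hm, Finset.sum_mul]
  exact Finset.sum_le_sum fun j _ => Nat.div_mul_le_self _ _

/-- Lucas' theorem for multinomial coefficients: `p` does not divide the multinomial
coefficient `(k_1 + ⋯ + k_n)! / (k_1! ⋯ k_n!)` if and only if at every base-`p` digit
position `i`, the digits of `k_1, …, k_n` add without carrying. -/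
theorem stmt3 (p n : ℕ) (hp : p.Prime) (k : Fin n → ℕ) :
    ¬ p ∣ Nat.multinomial Finset.univ k ↔
      ∀ i : ℕ, ∑ j : Fin n, (k j / p ^ i) % p ≤ p - 1 := by
  haveI : Fact p.Prime := ⟨hp⟩
  have hp1 : 1 < p := hp.one_lt
  set N := ∑ j : Fin n, k j with hN
  set b := Nat.log p N + 1 with hb
  have hlogN : Nat.log p N < b := by omega
  -- valuation of multinomial
  have hspec : (∏ j : Fin n, (k j)!) * Nat.multinomial Finset.univ k = N ! :=
    Nat.multinomial_spec _ _
  have hprodne : (∏ j : Fin n, (k j)!) ≠ 0 :=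
    Finset.prod_ne_zero_iff.mpr fun j _ => (Nat.factorial_pos _).ne'
  have hmultne : Nat.multinomial Finset.univ k ≠ 0 := (Nat.multinomial_pos _ _).ne'
  have hval : padicValNat p (∏ j : Fin n, (k j)!) + padicValNat p (Nat.multinomial Finset.univ k)
      = padicValNat p (N !) := by
    rw [← padicValNat.mul hprodne hmultne, hspec]
  have hvalprod : padicValNat p (∏ j : Fin n, (k j)!)
      = ∑ j : Fin n, ∑ i ∈ Finset.Ico 1 b, k j / p ^ i := by
    rw [← Nat.factorization_def _ hp, Nat.factorization_prod fun j _ => (Nat.factorial_pos _).ne']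
    rw [Finset.sum_apply']
    refine Finset.sum_congr rfl fun j _ => ?_
    rw [Nat.factorization_def _ hp]
    refine padicValNat_factorial ?_
    exact lt_of_le_of_lt (Nat.log_mono_right
      (Finset.single_le_sum (f := k) (fun j _ => Nat.zero_le _) (Finset.mem_univ j))) hlogN
  have hvalN : padicValNat p (N !) = ∑ i ∈ Finset.Ico 1 b, N / p ^ i :=
    padicValNat_factorial hlogN
  -- p ∤ multinomial ↔ valuation is 0
  have hdvd : ¬ p ∣ Nat.multinomial Finset.univ k ↔
      padicValNat p (Nat.multinomial Finset.univ k) = 0 := by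
    rw [padicValNat.eq_zero_iff]
    constructor
    · tauto
    · rintro (h | h | h) hd
      · omega
      · exact hmultne h
      · exact h hd
  rw [hdvd]
  have hval0 : padicValNat p (Nat.multinomial Finset.univ k) = 0 ↔
      ∑ i ∈ Finset.Ico 1 b, (∑ j : Fin n, k j / p ^ i) = ∑ i ∈ Finset.Ico 1 b, N / p ^ i := by
    rw [Finset.sum_comm, ← hvalprod]
    omega
  rw [hval0]
  have hle : ∀ i ∈ Finset.Ico 1 b, ∑ j : Fin n, k j / p ^ i ≤ N / p ^ i :=
    fun i _ => sum_div_le _ _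
  rw [Finset.sum_eq_sum_iff_of_le hle]
  -- termwise condition ↔ C i < p ^ i
  have hterm : ∀ i : ℕ, ((∑ j : Fin n, k j / p ^ i) = N / p ^ i ↔
      ∑ j : Fin n, k j % p ^ i < p ^ i) := by
    intro i
    have hpi : 0 < p ^ i := Nat.pow_pos (by omega)
    have hNd : N = p ^ i * (∑ j : Fin n, k j / p ^ i) + ∑ j : Fin n, k j % p ^ i := by
      rw [hN, Finset.mul_sum, ← Finset.sum_add_distrib]
      exact Finset.sum_congr rfl fun j _ => (Nat.div_add_mod (k j) (p ^ i)).symm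
    constructor
    · intro h
      by_contra hc
      push_neg at hc
      have : N / p ^ i ≥ (∑ j : Fin n, k j / p ^ i) + 1 := by
        rw [hNd]
        rw [Nat.mul_add_div hpi]
        have : (∑ j : Fin n, k j % p ^ i) / p ^ i ≥ 1 := (Nat.one_le_div_iff hpi).mpr hc
        omega
      omega
    · intro h
      rw [hNd, Nat.mul_add_div hpi, Nat.div_eq_of_lt h, add_zero]
  rw [← carry_iff p n hp1 k]
  constructor
  · intro h i
    induction i with
    | zero => simp [Nat.mod_one]
    | succ i ih =>
      rcases Nat.lt_or_ge (i + 1) b with hib | hib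
      · exact (hterm (i + 1)).mp (h (i + 1) (Finset.mem_Ico.mpr ⟨by omega, hib⟩))
      · -- i + 1 ≥ b : all k j < p ^ (i+1)
        calc ∑ j : Fin n, k j % p ^ (i + 1) ≤ ∑ j : Fin n, k j := by
              exact Finset.sum_le_sum fun j _ => Nat.mod_le _ _
          _ < p ^ (i + 1) := by
              calc N < p ^ b := Nat.lt_pow_of_log_lt hp1 (by omega)
                _ ≤ p ^ (i + 1) := Nat.pow_le_pow_right (by omega) hib
  · intro h i hi
    exact (hterm i).mpr (h i)
end

section
/- Let R = L[x_1,...,x_n] be a polynomial ring over a perfect field L of characteristic p > 0, I ⊆ R an ideal, and f ∈ R. Then f^(p^e) ∈ I^[p^e] if and only if f ∈ I, where I^[p^e] is the ideal generated by the p^e-th powers of elements of I. -/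
open MvPolynomial

namespace Stmt4Aux

lemma mod_small {q x : ℕ} (hq : 0 < q) (hx : x < 2 * q) :
    x % q = if x < q then x else x - q := by
  split_ifs with h
  · exact Nat.mod_eq_of_lt h
  · rw [Nat.mod_eq_sub_mod (le_of_not_gt h), Nat.mod_eq_of_lt (by omega)]

lemma natA {q : ℕ} (hq : 0 < q) (a m α : ℕ) :
    (a + m) % q = α % q ↔ m % q = (α % q + q - a % q) % q := by
  have ha : a % q < q := Nat.mod_lt _ hq
  have hm : m % q < q := Nat.mod_lt _ hq
  have hα : α % q < q := Nat.mod_lt _ hq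
  rw [Nat.add_mod a m]
  rw [mod_small hq (by omega : a % q + m % q < 2 * q),
    mod_small hq (by omega : α % q + q - a % q < 2 * q)]
  split_ifs <;> omega

lemma natB {q : ℕ} (hq : 0 < q) (a m : ℕ) :
    (a + m) / q = (a + m % q) / q + m / q := by
  have h := Nat.div_add_mod m q
  rw [show a + m = (a + m % q) + (m / q) * q by rw [mul_comm]; omega, Nat.add_mul_div_right _ _ hq]

variable {L : Type} [CommSemiring L] {n : ℕ} (q : ℕ) (θ : L →+* L)

noncomputable def mq (γ : Fin n →₀ ℕ) : Fin n →₀ ℕ :=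
  γ.mapRange (· % q) (Nat.zero_mod q)

noncomputable def dq (γ : Fin n →₀ ℕ) : Fin n →₀ ℕ :=
  γ.mapRange (· / q) (Nat.zero_div q)

noncomputable def eps (α γ : Fin n →₀ ℕ) : Fin n →₀ ℕ :=
  Finsupp.zipWith (fun A a => (A % q + q - a % q) % q) (by simp) α γ

@[simp] lemma mq_apply (γ : Fin n →₀ ℕ) (i : Fin n) : mq q γ i = γ i % q :=
  Finsupp.mapRange_apply ..
@[simp] lemma dq_apply (γ : Fin n →₀ ℕ) (i : Fin n) : dq q γ i = γ i / q :=
  Finsupp.mapRange_apply ..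
@[simp] lemma eps_apply (α γ : Fin n →₀ ℕ) (i : Fin n) :
    eps q α γ i = (α i % q + q - γ i % q) % q :=
  Finsupp.zipWith_apply ..

lemma mq_eps (hq : 0 < q) (α γ : Fin n →₀ ℕ) : mq q (eps q α γ) = eps q α γ := by
  ext i
  simp only [mq_apply, eps_apply]
  exact Nat.mod_mod_of_dvd _ dvd_rfl |>.trans rfl

noncomputable def S (α : Fin n →₀ ℕ) (h : MvPolynomial (Fin n) L) : MvPolynomial (Fin n) L :=
  (AddMonoidAlgebra.coeff h).sum fun γ c => if mq q γ = mq q α then monomial (dq q γ) (θ c) else 0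

lemma S_monomial (α γ : Fin n →₀ ℕ) (c : L) :
    S q θ α (monomial γ c) =
      if mq q γ = mq q α then monomial (dq q γ) (θ c) else 0 := by
  unfold S
  exact sum_monomial_eq (by simp)

lemma S_add (α : Fin n →₀ ℕ) (h₁ h₂ : MvPolynomial (Fin n) L) :
    S q θ α (h₁ + h₂) = S q θ α h₁ + S q θ α h₂ := by
  unfold S
  rw [AddMonoidAlgebra.coeff_add]
  exact Finsupp.sum_add_index' (by simp) (by intro γ c d; split_ifs <;> simp)

lemma S_zero (α : Fin n →₀ ℕ) : S q θ α 0 = 0 := by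
  unfold S; rw [AddMonoidAlgebra.coeff_zero]; exact Finsupp.sum_zero_index


lemma S_mul_monomial (hq : 0 < q) (α γ : Fin n →₀ ℕ) (c : L) (h : MvPolynomial (Fin n) L) :
    S q θ α (monomial γ c * h) =
      monomial (dq q (γ + eps q α γ)) (θ c) * S q θ (eps q α γ) h := by
  induction h using MvPolynomial.induction_on' with
  | monomial μ d =>
    rw [monomial_mul, S_monomial, S_monomial, mq_eps q hq]
    have hcond : (mq q (γ + μ) = mq q α) ↔ (mq q μ = eps q α γ) := by
      constructor
      · intro hc; ext i
        have := DFunLike.congr_fun hc i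
        simp only [mq_apply, Finsupp.add_apply, eps_apply] at this
        exact (natA hq (γ i) (μ i) (α i)).mp this
      · intro hc; ext i
        have := DFunLike.congr_fun hc i
        simp only [mq_apply, Finsupp.add_apply, eps_apply] at this
        exact (natA hq (γ i) (μ i) (α i)).mpr this
    split_ifs with h1 h2 h2
    · have hind : dq q (γ + μ) = dq q (γ + eps q α γ) + dq q μ := by
        ext i
        simp only [dq_apply, Finsupp.add_apply]
        rw [natB hq (γ i) (μ i)]
        have h3 := DFunLike.congr_fun (hcond.mp h1) i
        simp only [mq_apply] at h3
        rw [h3]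
      rw [monomial_mul, hind, map_mul]
    · exact absurd (hcond.mp h1) h2
    · exact absurd (hcond.mpr h2) h1
    · simp
  | add f g hf hg => rw [mul_add, S_add, S_add, hf, hg, mul_add]

lemma eps_smul (hq : 0 < q) (α u : Fin n →₀ ℕ) : eps q α (q • u) = mq q α := by
  ext i
  simp only [eps_apply, mq_apply, Finsupp.smul_apply, smul_eq_mul, Nat.mul_mod_right]
  rw [Nat.sub_zero, Nat.add_mod_right, Nat.mod_mod_of_dvd _ dvd_rfl]

lemma dq_smul_add_mq (hq : 0 < q) (α u : Fin n →₀ ℕ) : dq q (q • u + mq q α) = u := by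
  ext i
  simp only [dq_apply, Finsupp.add_apply, Finsupp.smul_apply, smul_eq_mul, mq_apply]
  rw [mul_comm, add_comm, Nat.add_mul_div_right _ _ hq, Nat.div_eq_of_lt (Nat.mod_lt _ hq),
    zero_add]

lemma S_mq (α : Fin n →₀ ℕ) (h : MvPolynomial (Fin n) L) :
    S q θ (mq q α) h = S q θ α h := by
  unfold S
  congr 1
  funext γ c
  have : mq q (mq q α) = mq q α := by
    ext i; simp [Nat.mod_mod_of_dvd]
  rw [this]


lemma mq_zero : mq q (0 : Fin n →₀ ℕ) = 0 := by ext i; simp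
lemma dq_zero : dq q (0 : Fin n →₀ ℕ) = 0 := by ext i; simp

lemma S_one_zero : S q θ 0 (1 : MvPolynomial (Fin n) L) = 1 := by
  rw [show (1 : MvPolynomial (Fin n) L) = monomial 0 1 from rfl, S_monomial, mq_zero, if_pos rfl,
    dq_zero, map_one]

lemma S_pow_mul (hq : 0 < q) (hθ : ∀ a : L, θ (a ^ q) = a)
    (hadd : ∀ f g : MvPolynomial (Fin n) L, (f + g) ^ q = f ^ q + g ^ q)
    (α : Fin n →₀ ℕ) (g h : MvPolynomial (Fin n) L) :
    S q θ α (g ^ q * h) = g * S q θ α h := by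
  induction g using MvPolynomial.induction_on' with
  | monomial u a =>
    rw [monomial_pow, S_mul_monomial _ _ hq, eps_smul _ hq, dq_smul_add_mq _ hq, hθ, S_mq]
  | add f g hf hg =>
    rw [hadd, add_mul, S_add, hf, hg, add_mul]

end Stmt4Aux

open Stmt4Aux in
/-- Over `R = L[x_1,…,x_n]` with `L` a perfect field of characteristic `p > 0`,
`f^(p^e) ∈ I^[p^e]` iff `f ∈ I`, where `I^[p^e]` is the ideal generated by the
`p^e`-th powers of elements of `I`. -/
theorem stmt4 (p n e : ℕ) (hp : p.Prime) (L : Type) [Field L] [CharP L p]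
    [ExpChar L p] [PerfectRing L p]
    (I : Ideal (MvPolynomial (Fin n) L)) (f : MvPolynomial (Fin n) L) :
    f ^ p ^ e ∈ Ideal.span ((fun g => g ^ p ^ e) '' (I : Set (MvPolynomial (Fin n) L)))
      ↔ f ∈ I := by
  set q := p ^ e with hqdef
  have hq : 0 < q := pow_pos hp.pos e
  constructor
  · intro hmem
    set θ : L →+* L := (iterateFrobeniusEquiv L p e).symm.toRingHom with hθdef
    have hθ : ∀ a : L, θ (a ^ q) = a := by
      intro a
      show (iterateFrobeniusEquiv L p e).symm (a ^ q) = a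
      rw [show a ^ q = iterateFrobeniusEquiv L p e a from rfl, RingEquiv.symm_apply_apply]
    haveI : ExpChar (MvPolynomial (Fin n) L) p := .prime hp
    have hadd : ∀ f g : MvPolynomial (Fin n) L, (f + g) ^ q = f ^ q + g ^ q := fun f g =>
      add_pow_expChar_pow f g p e
    have key : ∀ x ∈ Ideal.span ((fun g => g ^ q) '' (I : Set (MvPolynomial (Fin n) L))),
        ∀ α, S q θ α x ∈ I := by
      intro x hx
      induction hx using Submodule.span_induction with
      | mem x hx =>
        obtain ⟨g, hg, rfl⟩ := hx
        intro α
        show S q θ α (g ^ q) ∈ I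
        rw [← mul_one (g ^ q), S_pow_mul _ _ hq hθ hadd]
        exact I.mul_mem_right _ hg
      | zero => intro α; rw [S_zero]; exact I.zero_mem
      | add x y _ _ hx hy => intro α; rw [S_add]; exact I.add_mem (hx α) (hy α)
      | smul r x _ hx =>
        intro α
        rw [smul_eq_mul]
        induction r using MvPolynomial.induction_on' with
        | monomial γ c =>
          rw [S_mul_monomial _ _ hq]
          exact I.mul_mem_left _ (hx _)
        | add r₁ r₂ h₁ h₂ =>
          rw [add_mul, S_add]
          exact I.add_mem h₁ h₂
    have hf : S q θ 0 (f ^ q) = f := by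
      rw [← mul_one (f ^ q), S_pow_mul _ _ hq hθ hadd, S_one_zero, mul_one]
    rw [← hf]
    exact key _ hmem 0
  · intro hf
    exact Ideal.subset_span ⟨f, hf, rfl⟩
end

section
/- Let p be a prime and d an integer with p > d > 2, and write p = dω + a with 1 ≤ a < d. Let δ^(2) denote the second digit of the non-terminating base-p expansion of 1/d. If a ≥ 2, then (d - 1)·δ^(2) ≥ p + 1. -/
lemma aux1 (d m r p : ℤ) (h : d*m + r = 2*p) (hr : r = 4) (hd : 5 ≤ d) (hp : d + 2 ≤ p) :
    p + 1 ≤ (d-1)*m := by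
  have hmul : d * (p + 1) ≤ d * ((d - 1) * m) := by
    nlinarith [mul_nonneg (show (0:ℤ) ≤ p - d - 2 by omega) (show (0:ℤ) ≤ d - 2 by omega),
      mul_nonneg (show (0:ℤ) ≤ d by omega) (show (0:ℤ) ≤ d - 5 by omega)]
  exact le_of_mul_le_mul_left hmul (by omega)

lemma aux2 (d m r a p : ℤ) (h : d*m + r = a*p) (hrd : r ≤ d-1) (ha : 3 ≤ a) (hd : 3 ≤ d)
    (hp : d + a ≤ p) : p + 1 ≤ (d-1)*m := by
  have hmul : d * (p + 1) ≤ d * ((d - 1) * m) := by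
    nlinarith [mul_nonneg (mul_nonneg (show (0:ℤ) ≤ a - 3 by omega)
          (show (0:ℤ) ≤ p by omega)) (show (0:ℤ) ≤ d - 1 by omega),
      mul_nonneg (show (0:ℤ) ≤ p - d - 3 by omega) (show (0:ℤ) ≤ 2*d - 3 by omega),
      mul_nonneg (show (0:ℤ) ≤ d - 1 - r by omega) (show (0:ℤ) ≤ d - 1 by omega)]
  exact le_of_mul_le_mul_left hmul (by omega)


/-- Let `p` be prime with `p > d > 2`, `p = dω + a`, `2 ≤ a < d`. If `A 2` is the second
digit of the non-terminating base-`p` expansion of `1/d`, then `(d-1) * A 2 ≥ p + 1`. -/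
theorem stmt9 (p d ω a : ℕ) (hp : p.Prime) (hd : 2 < d) (hdp : d < p)
    (hω : 1 ≤ ω) (ha2 : 2 ≤ a) (had : a < d) (heq : p = d * ω + a)
    (A : ℕ → ℕ) (hA : ∀ e, A e ≤ p - 1)
    (hAsum : HasSum (fun e : ℕ => (A (e + 1) : ℝ) / (p : ℝ) ^ (e + 1)) (1 / (d : ℝ)))
    (hAnt : ∀ N, ∃ e ≥ N, A e ≠ 0) :
    p + 1 ≤ (d - 1) * A 2 := by
  have hppos : 0 < p := hp.pos
  have hp0 : (0:ℝ) < p := by exact_mod_cast hppos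
  have hp1 : (1:ℝ) < p := by exact_mod_cast hp.one_lt
  have hd0 : (0:ℝ) < d := by positivity
  set f : ℕ → ℝ := fun e => (A (e + 1) : ℝ) / (p : ℝ) ^ (e + 1) with hf
  have hfnn : ∀ i, 0 ≤ f i := fun i => by positivity
  set s : Finset ℕ := {0, 1} with hs
  set g : ℕ → ℝ := fun e => ((p:ℝ)-1) / (p : ℝ) ^ (e + 1) with hgdef
  have hsum01 : ∑ i ∈ s, f i = (A 1 : ℝ)/p + (A 2:ℝ)/p^2 := by
    simp [hs, Finset.sum_pair, hf]
  have hlow : (A 1 : ℝ)/p + (A 2:ℝ)/p^2 ≤ 1/d := by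
    rw [← hsum01]
    exact sum_le_hasSum s (fun i _ => hfnn i) hAsum
  -- geometric series
  have hinv : (0:ℝ) ≤ 1/p := by positivity
  have hinv1 : (1:ℝ)/p < 1 := by rw [div_lt_one hp0]; exact hp1
  have hg : HasSum g 1 := by
    have h := (hasSum_geometric_of_lt_one hinv hinv1).mul_left (((p:ℝ)-1)/(p:ℝ))
    have heqf : (fun i : ℕ => ((p:ℝ)-1)/(p:ℝ) * ((1:ℝ)/p)^i) = g := by
      funext i
      show ((p:ℝ)-1)/(p:ℝ) * ((1:ℝ)/p)^i = ((p:ℝ)-1) / (p:ℝ)^(i+1)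
      rw [div_pow, one_pow, div_mul_div_comm, pow_succ]
      ring
    have hv : ((p:ℝ)-1)/(p:ℝ) * ((1:ℝ) - 1/(p:ℝ))⁻¹ = 1 := by
      rw [show (1:ℝ) - 1/(p:ℝ) = ((p:ℝ)-1)/(p:ℝ) by field_simp]
      have hq : (0:ℝ) < ((p:ℝ)-1)/(p:ℝ) := div_pos (by linarith) hp0
      exact mul_inv_cancel₀ (ne_of_gt hq)
    rw [heqf, hv] at h
    exact h
  have hpt : ∀ i : ℕ, f i ≤ g i := by
    intro i
    have h1 : (A (i+1) : ℝ) ≤ (p:ℝ) - 1 := by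
      have h2 := hA (i+1)
      have h3 : (A (i+1) : ℝ) ≤ ((p-1 : ℕ) : ℝ) := by exact_mod_cast h2
      rwa [Nat.cast_sub hppos, Nat.cast_one] at h3
    show (A (i+1) : ℝ)/(p:ℝ)^(i+1) ≤ ((p:ℝ)-1)/(p:ℝ)^(i+1)
    gcongr
  have ht1 := Summable.sum_add_tsum_compl (s := s) hAsum.summable
  have ht2 := Summable.sum_add_tsum_compl (s := s) hg.summable
  have htail : (∑' (x : ↑((s:Set ℕ)ᶜ)), f ↑x) ≤ ∑' (x : ↑((s:Set ℕ)ᶜ)), g ↑x :=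
    Summable.tsum_le_tsum (fun i => hpt i) (hAsum.summable.subtype _) (hg.summable.subtype _)
  have hsum01g : ∑ i ∈ s, g i = ((p:ℝ)-1)/p + ((p:ℝ)-1)/p^2 := by
    simp [hs, Finset.sum_pair, hgdef]
  have hupp : 1/(d:ℝ) ≤ (A 1 : ℝ)/p + (A 2:ℝ)/p^2 + 1/p^2 := by
    rw [hAsum.tsum_eq, hsum01] at ht1
    rw [hg.tsum_eq, hsum01g] at ht2
    have hgt : (∑' (x : ↑((s:Set ℕ)ᶜ)), g ↑x) = 1 - (((p:ℝ)-1)/p + ((p:ℝ)-1)/p^2) := by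
      linarith
    have hgt2 : (1:ℝ) - (((p:ℝ)-1)/p + ((p:ℝ)-1)/p^2) = 1/p^2 := by
      field_simp
      ring
    rw [hgt, hgt2] at htail
    linarith
  -- translate to ℕ
  set k : ℕ := A 1 * p + A 2 with hk
  have hkR : (A 1 : ℝ)/p + (A 2:ℝ)/p^2 = (k:ℝ)/p^2 := by
    rw [hk]; push_cast; field_simp
  have hlk : d * k ≤ p^2 := by
    rw [hkR] at hlow
    have : (d:ℝ) * k ≤ (p:ℝ)^2 := by
      rw [div_le_div_iff₀ (by positivity) hd0] at hlow
      linarith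
    exact_mod_cast this
  have huk : p^2 ≤ d * (k+1) := by
    have hupp' : (1:ℝ)/d ≤ ((k:ℝ)+1)/p^2 := by
      rw [hkR] at hupp
      have : (k:ℝ)/p^2 + 1/p^2 = ((k:ℝ)+1)/p^2 := by ring
      linarith
    rw [div_le_div_iff₀ hd0 (by positivity)] at hupp'
    have : (p:ℝ)^2 ≤ (d:ℝ) * ((k:ℕ)+1) := by push_cast; linarith
    exact_mod_cast this
  have hcop : Nat.Coprime p d := (Nat.Prime.coprime_iff_not_dvd hp).mpr
      (fun h => absurd (Nat.le_of_dvd (by omega) h) (by omega))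
  have hndvd : ¬ d ∣ p^2 := by
    intro hdvd
    have hcop2 : Nat.Coprime d (p^2) := (hcop.symm).pow_right 2
    have := Nat.Coprime.eq_one_of_dvd hcop2 hdvd
    omega
  have hlt1 : d * k < p^2 := lt_of_le_of_ne hlk (fun h => hndvd ⟨k, h.symm⟩)
  have hlt2 : p^2 < d * (k+1) := lt_of_le_of_ne huk (fun h => hndvd ⟨k+1, h⟩)
  have hkdiv : p^2 / d = k := Nat.div_eq_of_lt_le (by linarith [hlt1]) (by linarith [hlt2])
  -- compute p^2 / d
  set m : ℕ := a * p / d with hm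
  have hp2 : p^2 = d * (ω * p) + a * p := by rw [pow_two]; nth_rewrite 1 [heq]; ring
  have hdiv2 : p^2 / d = ω * p + m := by
    rw [hp2, Nat.mul_add_div (by omega)]
  have hmp : m < p := by
    rw [hm, Nat.div_lt_iff_lt_mul (by omega : 0 < d)]
    calc a * p < d * p := (Nat.mul_lt_mul_right hppos).mpr had
      _ = p * d := by ring
  have hA2p : A 2 < p := by have := hA 2; omega
  have hA2m : A 2 = m := by
    have hkm : k = ω * p + m := by rw [← hkdiv, hdiv2]
    have hmod : k % p = A 2 := by rw [hk, Nat.mul_add_mod', Nat.mod_eq_of_lt hA2p]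
    rw [hkm, Nat.mul_add_mod', Nat.mod_eq_of_lt hmp] at hmod
    omega
  rw [hA2m]
  -- final arithmetic
  set r : ℕ := (a * p) % d with hr
  have hdm : d * m + r = a * p := by rw [hm, hr, Nat.div_add_mod]
  have hrd : r < d := Nat.mod_lt _ (by omega)
  have hr0 : r ≠ 0 := by
    intro h
    have hdvd : d ∣ a * p := Nat.dvd_of_mod_eq_zero (hr ▸ h)
    have hda : d ∣ a := Nat.Coprime.dvd_of_dvd_mul_right (hcop.symm) hdvd
    have := Nat.le_of_dvd (by omega) hda
    omega
  have hra : r = (a * a) % d := by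
    rw [hr, heq, Nat.mul_add, ← Nat.mul_assoc, Nat.mul_comm a d, Nat.mul_assoc,
      Nat.mul_add_mod]
  have hpda : d + a ≤ p := by
    rw [heq]
    have : d * 1 ≤ d * ω := Nat.mul_le_mul_left d hω
    omega
  have hgoal : ∀ _ : (p:ℤ) + 1 ≤ ((d:ℤ) - 1) * m, p + 1 ≤ (d - 1) * m := by
    intro h
    zify [show 1 ≤ d by omega]
    exact h
  -- case analysis
  rcases Nat.lt_or_ge a 3 with ha3 | ha3
  · -- a = 2
    have ha : a = 2 := by omega
    subst ha
    rcases Nat.lt_or_ge d 5 with hd5 | hd5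
    · interval_cases d
      · -- d = 3
        norm_num at hra
        omega
      · -- d = 4 : p even, contradiction
        exfalso
        have h2 : (2:ℕ) ∣ p := ⟨2 * ω + 1, by omega⟩
        rcases (hp.eq_one_or_self_of_dvd 2 h2) with h | h <;> omega
    · have hr4 : r = 4 := by
        rw [hra, Nat.mod_eq_of_lt (by omega)]
      apply hgoal
      refine aux1 d m r p ?_ (by exact_mod_cast hr4) (by exact_mod_cast hd5) ?_
      · exact_mod_cast hdm
      · exact_mod_cast hpda
  · -- a ≥ 3
    apply hgoal
    refine aux2 d m r a p (by exact_mod_cast hdm) ?_ (by exact_mod_cast ha3)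
      (by exact_mod_cast hd) (by exact_mod_cast hpda)
    have : (r:ℤ) < d := by exact_mod_cast hrd
    omega
end

section
/- Let p be a prime and d ≥ 2 an integer with p > d, p = dω + a, 2 ≤ a < d, and suppose p < a(d-1). Let δ^(2) be the second base-p digit of 1/d. Then there exist non-negative integers l_1, ..., l_{d-1} with l_1 + ... + l_{d-1} = p - 1, l_i ≤ δ^(2) for all i, and l_{d-1} < δ^(2). -/
theorem stmt18aux (d ω a q r : ℤ) (hd : 3 ≤ d) (ha : 2 ≤ a) (had : a + 1 ≤ d)
    (hω : 1 ≤ ω) (hqr : d * q + r = a ^ 2) (hr : r < d) (_hr0 : 0 ≤ r) (hq0 : 0 ≤ q) :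
    d * ω + a + 1 ≤ (d - 1) * (a * ω + q) := by
  have hu : (1:ℤ) ≤ (a - 1) * (d - 1) := by nlinarith
  rcases le_or_gt 1 q with hq1 | hq0'
  · nlinarith [mul_nonneg (by linarith : (0:ℤ) ≤ ω - 1) (by linarith : (0:ℤ) ≤ (a - 1) * (d - 1) - 1),
      mul_nonneg (by linarith : (0:ℤ) ≤ d - 1) (by linarith : (0:ℤ) ≤ q - 1),
      mul_nonneg (by linarith : (0:ℤ) ≤ a - 2) (by linarith : (0:ℤ) ≤ d - 1)]
  · have hq : q = 0 := by omega
    subst hq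
    have haa : a ^ 2 + 1 ≤ d := by omega
    nlinarith [mul_nonneg (by linarith : (0:ℤ) ≤ ω - 1) (by linarith : (0:ℤ) ≤ (a - 1) * (d - 1) - 1),
      mul_nonneg (by linarith : (0:ℤ) ≤ a - 1) (by linarith : (0:ℤ) ≤ d - 1 - a ^ 2),
      mul_nonneg (by linarith : (0:ℤ) ≤ a - 2) (by positivity : (0:ℤ) ≤ a ^ 2 + a + 1)]

/-- Let `p` be prime, `p > d ≥ 2`, `p = dω + a`, `2 ≤ a < d`, `p < a(d-1)`, and let
`A 2` be the second base-`p` digit of `1/d`. Then there exist non-negative integers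
`l_1, …, l_{d-1}` with `∑ l_i = p - 1`, `l_i ≤ A 2` for all `i`, and `l_{d-1} < A 2`. -/
theorem stmt18 (p d ω a : ℕ) (hp : p.Prime) (hd : 2 ≤ d) (hdp : d < p)
    (hω : 1 ≤ ω) (ha2 : 2 ≤ a) (had : a < d) (heq : p = d * ω + a)
    (hlt : p < a * (d - 1))
    (A : ℕ → ℕ) (hA : ∀ e, A e ≤ p - 1)
    (hAsum : HasSum (fun e : ℕ => (A (e + 1) : ℝ) / (p : ℝ) ^ (e + 1)) (1 / (d : ℝ)))
    (hAnt : ∀ N, ∃ e ≥ N, A e ≠ 0) :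
    ∃ l : ℕ → ℕ, (∑ i ∈ Finset.Icc 1 (d - 1), l i) = p - 1 ∧
      (∀ i ∈ Finset.Icc 1 (d - 1), l i ≤ A 2) ∧ l (d - 1) < A 2 := by
  have hp0 : 0 < p := hp.pos
  have hpR : (0:ℝ) < p := by exact_mod_cast hp0
  have hp1R : (1:ℝ) < p := by exact_mod_cast hp.one_lt
  have hdR : (0:ℝ) < d := by positivity
  -- tail sum
  have htail : HasSum (fun e : ℕ => (A (e + 2 + 1) : ℝ) / (p : ℝ) ^ (e + 2 + 1))
      (1 / (d:ℝ) - ∑ i ∈ Finset.range 2, (A (i + 1) : ℝ) / (p : ℝ) ^ (i + 1)) :=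
    (hasSum_nat_add_iff' (f := fun e : ℕ => (A (e + 1) : ℝ) / (p : ℝ) ^ (e + 1)) 2).mpr hAsum
  have hrange : (∑ i ∈ Finset.range 2, (A (i + 1) : ℝ) / (p : ℝ) ^ (i + 1))
      = (A 1 : ℝ) / p + (A 2 : ℝ) / p ^ 2 := by
    simp [Finset.sum_range_succ]
  rw [hrange] at htail
  -- geometric bound
  have hgeo : HasSum (fun e : ℕ => ((p:ℝ) - 1) / (p:ℝ) ^ 3 * (1 / (p:ℝ)) ^ e)
      (1 / (p:ℝ) ^ 2) := by
    have h1 : (1 / (p:ℝ)) < 1 := by rw [div_lt_one hpR]; exact hp1R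
    have h0 : (0:ℝ) ≤ 1 / (p:ℝ) := by positivity
    have hs := (hasSum_geometric_of_lt_one h0 h1).mul_left (((p:ℝ) - 1) / (p:ℝ) ^ 3)
    have key : ((p:ℝ) - 1) / (p:ℝ)^3 * (1 - 1/(p:ℝ))⁻¹ = 1/(p:ℝ)^2 := by
      have h4 : (p:ℝ) - 1 ≠ 0 := by linarith
      have h5 : (1:ℝ) - 1/p = ((p:ℝ)-1)/p := by field_simp
      rw [h5, inv_div, div_mul_div_comm, div_eq_div_iff (by positivity) (by positivity)]
      ring
    rwa [key] at hs
  have hge : (0:ℝ) ≤ 1 / (d:ℝ) - ((A 1 : ℝ) / p + (A 2 : ℝ) / p ^ 2) :=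
    hasSum_le (fun i => by positivity) hasSum_zero htail
  have hle : 1 / (d:ℝ) - ((A 1 : ℝ) / p + (A 2 : ℝ) / p ^ 2) ≤ 1 / (p:ℝ) ^ 2 := by
    refine hasSum_le (fun i => ?_) htail hgeo
    have h2 : (A (i + 2 + 1) : ℝ) ≤ (p:ℝ) - 1 := by
      have : ((A (i + 2 + 1) : ℕ) : ℝ) ≤ ((p - 1 : ℕ) : ℝ) := by exact_mod_cast hA (i + 2 + 1)
      rwa [Nat.cast_sub hp0, Nat.cast_one] at this
    calc (A (i + 2 + 1) : ℝ) / (p:ℝ) ^ (i + 2 + 1)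
        ≤ ((p:ℝ) - 1) / (p:ℝ) ^ (i + 2 + 1) := by gcongr
      _ = ((p:ℝ) - 1) / (p:ℝ) ^ 3 * (1 / (p:ℝ)) ^ i := by
          rw [div_pow, one_pow, div_mul_div_comm, mul_one]
          congr 1
          ring
  -- natural-number inequalities for S = A 1 * p + A 2
  set S : ℕ := A 1 * p + A 2 with hSdef
  have hSR : ((S:ℝ)) = (A 1 : ℝ) * p + A 2 := by rw [hSdef]; push_cast; ring
  have hnat1 : d * S ≤ p ^ 2 := by
    have h := mul_le_mul_of_nonneg_left (by linarith : (A 1 : ℝ) / p + (A 2 : ℝ) / p ^ 2 ≤ 1 / d)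
      (by positivity : (0:ℝ) ≤ (d:ℝ) * (p:ℝ) ^ 2)
    have h2 : (d:ℝ) * S ≤ (p:ℝ) ^ 2 := by
      rw [hSR]
      calc (d:ℝ) * ((A 1 : ℝ) * p + A 2) = (d:ℝ) * (p:ℝ)^2 * ((A 1:ℝ)/p + (A 2:ℝ)/p^2) := by
            field_simp
        _ ≤ (d:ℝ) * (p:ℝ)^2 * (1/d) := h
        _ = (p:ℝ) ^ 2 := by field_simp
    exact_mod_cast h2
  have hnat2 : p ^ 2 ≤ d * S + d := by
    have h := mul_le_mul_of_nonneg_left hle (by positivity : (0:ℝ) ≤ (d:ℝ) * (p:ℝ) ^ 2)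
    have h2 : (p:ℝ) ^ 2 ≤ (d:ℝ) * S + d := by
      rw [hSR]
      have hc : (d:ℝ) * (p:ℝ)^2 * (1/d - ((A 1 : ℝ)/p + (A 2:ℝ)/p^2))
          = (p:ℝ)^2 - ((d:ℝ) * ((A 1:ℝ)*p + A 2)) := by field_simp
      have hc2 : (d:ℝ) * (p:ℝ)^2 * (1/(p:ℝ)^2) = d := by field_simp
      rw [hc, hc2] at h
      linarith
    exact_mod_cast h2
  -- d does not divide p^2
  have hnd : ¬ d ∣ p ^ 2 := by
    intro hdvd
    have hcop : Nat.Coprime p d := hp.coprime_iff_not_dvd.mpr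
      (fun h => absurd (Nat.le_of_dvd (by omega) h) (by omega))
    have : d = 1 := (Nat.Coprime.pow_right 2 hcop.symm).eq_one_of_dvd hdvd
    omega
  -- strict inequalities
  have hstrict1 : d * S < p ^ 2 :=
    lt_of_le_of_ne hnat1 (fun h => hnd ⟨S, h.symm⟩)
  have hstrict2 : p ^ 2 < d * S + d := by
    refine lt_of_le_of_ne hnat2 (fun h => hnd ⟨S + 1, ?_⟩)
    rw [h]; ring
  -- arithmetic identity for p^2
  set q : ℕ := a ^ 2 / d with hqdef
  set r : ℕ := a ^ 2 % d with hrdef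
  have hqr : d * q + r = a ^ 2 := Nat.div_add_mod (a ^ 2) d
  have hrlt : r < d := Nat.mod_lt _ (by omega)
  have hp2 : p ^ 2 = d * (ω * p + a * ω + q) + r := by
    zify
    zify at heq hqr
    linear_combination ((p:ℤ) + a) * heq - hqr
  -- S = ω * p + (a * ω + q)
  set K : ℕ := ω * p + a * ω + q with hKdef
  have hSK : S = K := by
    have h1 : d * S < d * (K + 1) := by
      have : d * (K + 1) = d * K + d := by ring
      omega
    have h2 : d * K < d * (S + 1) := by
      have : d * (S + 1) = d * S + d := by ring
      omega
    have h3 : S < K + 1 := Nat.lt_of_mul_lt_mul_left h1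
    have h4 : K < S + 1 := Nat.lt_of_mul_lt_mul_left h2
    omega
  -- extract A 2
  have hqa : q < a := (Nat.div_lt_iff_lt_mul (by omega : 0 < d)).mpr (by nlinarith)
  have hA2lt : A 2 < p := lt_of_le_of_lt (hA 2) (by omega)
  have hxlt : a * ω + q < p := by
    have h1 : a * ω + q < a * ω + a := by omega
    have h2 : a * ω + a ≤ d * ω + a := by
      have := Nat.mul_le_mul_right ω (le_of_lt had)
      omega
    omega
  have hA2 : A 2 = a * ω + q := by
    have e1 : A 1 * p + A 2 = ω * p + (a * ω + q) := by
      rw [← hSdef, hSK, hKdef]; ring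
    have d1 : (A 1 * p + A 2) / p = A 1 := by
      rw [mul_comm, Nat.mul_add_div hp0, Nat.div_eq_of_lt hA2lt, add_zero]
    have d2 : (ω * p + (a * ω + q)) / p = ω := by
      rw [mul_comm, Nat.mul_add_div hp0, Nat.div_eq_of_lt hxlt, add_zero]
    have hA1ω : A 1 = ω := by rw [← d1, e1, d2]
    rw [hA1ω] at e1
    omega
  -- the key bound (d-1) * A 2 ≥ p + 1
  have hd3 : 3 ≤ d := by omega
  have hkeyZ : ((p:ℤ)) + 1 ≤ ((d:ℤ) - 1) * (a * ω + q) := by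
    have heqZ : (p:ℤ) = d * ω + a := by exact_mod_cast heq
    have hqrZ : (d:ℤ) * q + r = (a:ℤ) ^ 2 := by exact_mod_cast hqr
    rw [heqZ]
    exact stmt18aux d ω a q r (by exact_mod_cast hd3) (by exact_mod_cast ha2)
      (by exact_mod_cast had) (by exact_mod_cast hω) hqrZ
      (by exact_mod_cast hrlt) (by positivity) (by positivity)
  have hkey : p + 1 ≤ (d - 1) * A 2 := by
    rw [hA2]
    have hcast : (((d - 1) * (a * ω + q) : ℕ) : ℤ) = ((d:ℤ) - 1) * (a * ω + q) := by
      push_cast [Nat.cast_sub (by omega : 1 ≤ d)]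
      ring
    have : ((p + 1 : ℕ) : ℤ) ≤ (((d - 1) * (a * ω + q) : ℕ) : ℤ) := by
      rw [hcast]; push_cast; exact hkeyZ
    exact_mod_cast this
  -- construction
  set M : ℕ := A 2 with hM
  have hM1 : 1 ≤ M := by by_contra h; push_neg at h; interval_cases M <;> omega
  set k : ℕ := (p - 1) / M with hk
  set rr : ℕ := (p - 1) % M with hrr
  have hdm : M * k + rr = p - 1 := Nat.div_add_mod (p - 1) M
  have hrrM : rr < M := Nat.mod_lt _ hM1
  have hkd : k ≤ d - 2 := by
    by_contra h
    push_neg at h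
    have h1 : (d - 1) * M ≤ k * M := Nat.mul_le_mul_right M (by omega)
    have h2 : k * M ≤ p - 1 := Nat.div_mul_le_self _ _
    have h3 : p + 1 ≤ p - 1 := le_trans hkey (le_trans h1 h2)
    omega
  refine ⟨fun i => if i ≤ k then M else if i = k + 1 then rr else 0, ?_, ?_, ?_⟩
  · -- sum
    have hd3 : 3 ≤ d := by omega
    have hicc : Finset.Icc 1 (d - 1) = Finset.Ioc 0 (d - 1) := Finset.Icc_add_one_left_eq_Ioc 0 (d - 1)
    rw [hicc]
    have hsplit1 := Finset.sum_Ioc_consecutive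
      (f := fun i => if i ≤ k then M else if i = k + 1 then rr else 0)
      (Nat.zero_le k) (by omega : k ≤ d - 1)
    have hsplit2 := Finset.sum_Ioc_consecutive
      (f := fun i => if i ≤ k then M else if i = k + 1 then rr else 0)
      (by omega : k ≤ k + 1) (by omega : k + 1 ≤ d - 1)
    rw [← hsplit1, ← hsplit2]
    have e1 : (∑ i ∈ Finset.Ioc 0 k, if i ≤ k then M else if i = k + 1 then rr else 0) = k * M := by
      rw [Finset.sum_congr rfl (fun i hi => by
        simp only [Finset.mem_Ioc] at hi
        rw [if_pos hi.2])]
      rw [Finset.sum_const, Nat.card_Ioc, smul_eq_mul, Nat.sub_zero]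
    have e2 : (∑ i ∈ Finset.Ioc k (k + 1), if i ≤ k then M else if i = k + 1 then rr else 0)
        = rr := by
      rw [Nat.Ioc_succ_singleton, Finset.sum_singleton, if_neg (by omega), if_pos rfl]
    have e3 : (∑ i ∈ Finset.Ioc (k + 1) (d - 1),
        if i ≤ k then M else if i = k + 1 then rr else 0) = 0 := by
      apply Finset.sum_eq_zero
      intro i hi
      simp only [Finset.mem_Ioc] at hi
      rw [if_neg (by omega), if_neg (by omega)]
    rw [e1, e2, e3, add_zero, mul_comm]
    exact hdm
  · intro i _
    dsimp only
    split
    · exact le_rfl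
    · split
      · exact le_of_lt hrrM
      · exact Nat.zero_le _
  · dsimp only
    rw [if_neg (by omega)]
    split
    · exact hrrM
    · exact hM1
end

section
/- Let p be a prime, d ≥ 2 not a power of p, and e ≥ 1. For any k = (k_1,...,k_d) ∈ ℕ^d and index i, there is at most one way to write the monomial x^(d·k) (in variables x_1,...,x_d) as x_i^(p^e) times an element μ of the set B_e of monomials with all exponents < p^e: precisely, if d·k - p^e·e_i and d·κ - p^e·c both have all entries in [0, p^e) with c ∈ ℕ^d, |κ| = |k|, and d·k - p^e·e_i = d·κ - p^e·c componentwise, then c = e_i and κ = k. -/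
/-- Let `p` be prime, `d ≥ 2` not a power of `p`, `e ≥ 1`. If `k, κ, c ∈ ℕ^d`, `i` an
index, `|κ| = |k|`, the vectors `d·k - p^e·e_i` and `d·κ - p^e·c` both have all entries
in `[0, p^e)` and are equal componentwise, then `c = e_i` and `κ = k`. -/
theorem stmt19 (p d e : ℕ) (hp : p.Prime) (hd : 2 ≤ d) (he : 1 ≤ e)
    (hnp : ∀ m : ℕ, d ≠ p ^ m)
    (k κ c : Fin d → ℕ) (i : Fin d)
    (hsum : ∑ j, κ j = ∑ j, k j)
    (hk : ∀ j, 0 ≤ (d : ℤ) * k j - p ^ e * (if j = i then 1 else 0) ∧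
      (d : ℤ) * k j - p ^ e * (if j = i then 1 else 0) < (p : ℤ) ^ e)
    (hκ : ∀ j, 0 ≤ (d : ℤ) * κ j - p ^ e * c j ∧
      (d : ℤ) * κ j - p ^ e * c j < (p : ℤ) ^ e)
    (heqv : ∀ j, (d : ℤ) * k j - p ^ e * (if j = i then 1 else 0) =
      (d : ℤ) * κ j - p ^ e * c j) :
    (∀ j, c j = if j = i then 1 else 0) ∧ κ = k := by
  have hpe : (0:ℤ) < (p:ℤ)^e := pow_pos (by exact_mod_cast hp.pos) e
  -- the sum of c is 1
  have hcsum : ∑ j, c j = 1 := by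
    have h1 : ∑ j, ((d:ℤ) * k j - p ^ e * (if j = i then 1 else 0)) =
        ∑ j, ((d:ℤ) * κ j - p ^ e * c j) := Finset.sum_congr rfl (fun j _ => heqv j)
    rw [Finset.sum_sub_distrib, Finset.sum_sub_distrib] at h1
    have h2 : ∑ j, (p:ℤ)^e * (if j = i then 1 else 0) = (p:ℤ)^e := by simp
    have h3 : ∑ j, (d:ℤ) * k j = ∑ j, (d:ℤ) * κ j := by
      rw [← Finset.mul_sum, ← Finset.mul_sum]
      congr 1
      exact_mod_cast hsum.symm
    have h4 : ∑ j, (p:ℤ)^e * (c j : ℤ) = (p:ℤ)^e * ∑ j, (c j : ℤ) := by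
      rw [Finset.mul_sum]
    have h5 : (p:ℤ)^e * ∑ j, (c j : ℤ) = (p:ℤ)^e * 1 := by
      rw [mul_one]; rw [h2, h3, h4] at h1; linarith
    have h6 : ∑ j, (c j : ℤ) = 1 := mul_left_cancel₀ (ne_of_gt hpe) h5
    exact_mod_cast h6
  -- c vanishes off i
  have hoff : ∀ j, j ≠ i → c j = 0 := by
    intro j hj
    by_contra hne
    have h1 : 1 ≤ c j := Nat.one_le_iff_ne_zero.mpr hne
    have h2 : c j ≤ 1 := hcsum ▸ Finset.single_le_sum (fun _ _ => Nat.zero_le _)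
      (Finset.mem_univ j)
    have hcj : c j = 1 := le_antisymm h2 h1
    have := heqv j
    rw [if_neg hj, hcj] at this
    have hdd : (d:ℤ) * ((κ j : ℤ) - k j) = (p:ℤ)^e := by push_cast at this ⊢; linarith
    have hdvd : (d:ℤ) ∣ (p:ℤ)^e := ⟨_, hdd.symm⟩
    have hdvdn : d ∣ p ^ e := by exact_mod_cast hdvd
    obtain ⟨m, _, hm⟩ := (Nat.dvd_prime_pow hp).mp hdvdn
    exact hnp m hm
  -- c i = 1
  have hci : c i = 1 := by
    have := Finset.sum_eq_single (M := ℕ) i (fun j _ hj => hoff j hj) (fun h => absurd (Finset.mem_univ i) h)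
    rw [hcsum] at this; omega
  have hc : ∀ j, c j = if j = i then 1 else 0 := by
    intro j
    by_cases hj : j = i
    · simp [hj, hci]
    · simp [hj, hoff j hj]
  refine ⟨hc, funext fun j => ?_⟩
  have hthis := heqv j
  rw [hc j] at hthis
  by_cases hj : j = i
  · subst hj; simp at hthis; omega
  · simp [hj] at hthis; omega
end
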